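/- Let $K$ be a field of characteristic different from $2$ and let $a, b, c \in K$. (i) If $x, y \in K$ satisfy $y^2 = x^3 - ax^2 - cx + b^2$ and $x \neq 0$, then $u := (y-b)/x$ and $z := 2x - u^2 - a$ satisfy $z^2 = (u^2 + a)^2 + 8bu + 4c$, and moreover $(z + u^2 + a)/2 = x$ and $ux + b = y$. (ii) If $u, z \in K$ satisfy $z^2 = (u^2 + a)^2 + 8bu + 4c$, then $x := (z + u^2 + a)/2$ and $y := ux + b$ satisfy $y^2 = x^3 - ax^2 - cx + b^2$, and if $x \neq 0$ then $(y-b)/x = u$ and $2x - u^2 - a = z$. -/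

import Mathlib

/-- The explicit birational isomorphism of Proposition 6.3(a) between the curve
`F : z² = (u²+a)² + 8bu + 4c` and the elliptic curve `E : y² = x³ - ax² - cx + b²`,
given by `u = (y-b)/x`, `z = 2x - u² - a`, with inverse `x = (z + u² + a)/2`,
`y = ux + b`. -/
theorem stmt_6 {K : Type*} [Field K] (hchar : (2 : K) ≠ 0) (a b c : K) :
    (∀ x y : K, y ^ 2 = x ^ 3 - a * x ^ 2 - c * x + b ^ 2 → x ≠ 0 →
      (2 * x - ((y - b) / x) ^ 2 - a) ^ 2 =
          (((y - b) / x) ^ 2 + a) ^ 2 + 8 * b * ((y - b) / x) + 4 * c ∧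
        ((2 * x - ((y - b) / x) ^ 2 - a) + ((y - b) / x) ^ 2 + a) / 2 = x ∧
        ((y - b) / x) * x + b = y) ∧
    (∀ u z : K, z ^ 2 = (u ^ 2 + a) ^ 2 + 8 * b * u + 4 * c →
      (u * ((z + u ^ 2 + a) / 2) + b) ^ 2 =
          ((z + u ^ 2 + a) / 2) ^ 3 - a * ((z + u ^ 2 + a) / 2) ^ 2
            - c * ((z + u ^ 2 + a) / 2) + b ^ 2 ∧
        ((z + u ^ 2 + a) / 2 ≠ 0 →
          ((u * ((z + u ^ 2 + a) / 2) + b) - b) / ((z + u ^ 2 + a) / 2) = u ∧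
          2 * ((z + u ^ 2 + a) / 2) - u ^ 2 - a = z)) := by
  constructor
  · intro x y h hx
    refine ⟨?_, ?_, ?_⟩
    · field_simp
      linear_combination (-4 * x ^ 3) * h
    · field_simp
      ring
    · field_simp
      ring
  · intro u z h
    refine ⟨?_, fun hx => ⟨?_, ?_⟩⟩
    · field_simp
      linear_combination (-(z + u ^ 2 + a)) * h
    · have hz : z + u ^ 2 + a ≠ 0 := by
        intro h0; apply hx; rw [h0]; simp
      field_simp
      ring
    · field_simp
      ring
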